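/- Let ε ∈ (0,1/4), L ≥ 0, and let m : [−1,1] → [0,∞) be Lipschitz continuous with Lipschitz constant L, with m(r) > 0 for every r ∈ (−1,1) and m(−1) = m(1) = 0. Define m_ε : ℝ → ℝ by m_ε(r) = m(r) for |r| ≤ 1−ε, m_ε(r) = m(1−ε) for r > 1−ε, and m_ε(r) = m(−1+ε) for r < −1+ε, and let M_ε : ℝ → ℝ be twice differentiable with M_ε(0) = 0, M_ε'(0) = 0 and M_ε''(r) = 1/m_ε(r) for all r ∈ ℝ. Then for every r ∈ ℝ, (max(|r|−1, 0))² ≤ 2·ε·L·M_ε(r). -/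

import Mathlib

/-- Auxiliary: one-sided estimate. -/
lemma aux10 (c : ℝ) (hc : 0 < c) (f f' g : ℝ → ℝ)
    (hf : ∀ s : ℝ, HasDerivAt f (f' s) s) (hf' : ∀ s : ℝ, HasDerivAt f' (1 / g s) s)
    (hgpos : ∀ s : ℝ, 0 < g s) (hgle : ∀ s : ℝ, 1 ≤ s → g s ≤ c)
    (hf'1 : 0 ≤ f' 1) (hf1 : 0 ≤ f 1) (r : ℝ) (hr : 1 ≤ r) :
    (r - 1) ^ 2 ≤ 2 * c * f r := by
  -- step 1: f' s ≥ (s-1)/c on [1, ∞)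
  have hk : ∀ s : ℝ, 1 ≤ s → (s - 1) / c ≤ f' s := by
    intro s hs
    set k : ℝ → ℝ := fun s => f' s - (s - 1) / c with hkdef
    have hkd : ∀ t : ℝ, HasDerivAt k (1 / g t - 1 / c) t := fun t => by
      exact (hf' t).sub (((hasDerivAt_id t).sub_const 1).div_const c)
    have hmono : MonotoneOn k (Set.Ici (1 : ℝ)) := by
      apply monotoneOn_of_deriv_nonneg (convex_Ici 1)
        (fun t _ => (hkd t).continuousAt.continuousWithinAt)
        (fun t _ => ((hkd t).differentiableAt).differentiableWithinAt)
      intro t ht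
      rw [interior_Ici] at ht
      rw [(hkd t).deriv]
      have h1 : g t ≤ c := hgle t (le_of_lt ht)
      have := one_div_le_one_div_of_le (hgpos t) h1
      linarith
    have := hmono (Set.self_mem_Ici) hs hs
    have hk1 : k 1 = f' 1 := by simp [hkdef]
    have hks : k s = f' s - (s - 1) / c := rfl
    rw [hk1, hks] at this
    linarith [this, hf'1]
  -- step 2: f s ≥ (s-1)^2/(2c) on [1, ∞)
  set h : ℝ → ℝ := fun s => f s - (s - 1) ^ 2 / (2 * c) with hhdef
  have hhd : ∀ t : ℝ, HasDerivAt h (f' t - 2 * (t - 1) / (2 * c)) t := fun t => by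
    have h2 : HasDerivAt (fun s : ℝ => (s - 1) ^ 2) (2 * (t - 1)) t := by
      exact (((hasDerivAt_id t).sub_const 1).pow 2).congr_deriv (by simp)
    exact (hf t).sub (h2.div_const (2 * c))
  have hmono : MonotoneOn h (Set.Ici (1 : ℝ)) := by
    apply monotoneOn_of_deriv_nonneg (convex_Ici 1)
      (fun t _ => (hhd t).continuousAt.continuousWithinAt)
      (fun t _ => ((hhd t).differentiableAt).differentiableWithinAt)
    intro t ht
    rw [interior_Ici] at ht
    rw [(hhd t).deriv]
    have := hk t (le_of_lt ht)
    have heq : 2 * (t - 1) / (2 * c) = (t - 1) / c := by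
      field_simp
    rw [heq]
    linarith
  have hfin := hmono (Set.self_mem_Ici) hr hr
  have h1 : h 1 = f 1 := by simp [hhdef]
  rw [h1] at hfin
  have : (r - 1) ^ 2 / (2 * c) ≤ f r := by
    have heq : h r = f r - (r - 1) ^ 2 / (2 * c) := rfl
    rw [heq] at hfin
    linarith [hfin]
  calc (r - 1) ^ 2 = (r - 1) ^ 2 / (2 * c) * (2 * c) := by field_simp
    _ ≤ f r * (2 * c) := by
        apply mul_le_mul_of_nonneg_right this (by positivity)
    _ = 2 * c * f r := by ring

/-- Let `ε ∈ (0,1/4)`, `L ≥ 0`, and let `m : [−1,1] → [0,∞)` be `L`-Lipschitz, positive on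
`(−1,1)` and vanishing exactly at `±1`. Let `m_ε` be the truncation of `m` at level `1−ε`
and let `M_ε` satisfy `M_ε(0) = M_ε'(0) = 0` and `M_ε'' = 1/m_ε`. Then for every `r ∈ ℝ`,
`(max(|r|−1, 0))² ≤ 2·ε·L·M_ε(r)`. -/
theorem stmt10 (ε L : ℝ) (hε : ε ∈ Set.Ioo (0 : ℝ) (1 / 4)) (hL : 0 ≤ L)
    (m : ℝ → ℝ)
    (hm_lip : ∀ x ∈ Set.Icc (-1 : ℝ) 1, ∀ y ∈ Set.Icc (-1 : ℝ) 1, |m x - m y| ≤ L * |x - y|)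
    (hm_nonneg : ∀ r ∈ Set.Icc (-1 : ℝ) 1, 0 ≤ m r)
    (hm_pos : ∀ r ∈ Set.Ioo (-1 : ℝ) 1, 0 < m r)
    (hm1 : m 1 = 0) (hm1' : m (-1) = 0)
    (mε : ℝ → ℝ)
    (hmε1 : ∀ r : ℝ, |r| ≤ 1 - ε → mε r = m r)
    (hmε2 : ∀ r : ℝ, 1 - ε < r → mε r = m (1 - ε))
    (hmε3 : ∀ r : ℝ, r < -1 + ε → mε r = m (-1 + ε))
    (Mε Mε' : ℝ → ℝ)
    (hM0 : Mε 0 = 0) (hM'0 : Mε' 0 = 0)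
    (hMd1 : ∀ r : ℝ, HasDerivAt Mε (Mε' r) r)
    (hMd2 : ∀ r : ℝ, HasDerivAt Mε' (1 / mε r) r) :
    ∀ r : ℝ, (max (|r| - 1) 0) ^ 2 ≤ 2 * ε * L * Mε r := by
  obtain ⟨hε0, hε4⟩ := hε
  have h1ε : (1 : ℝ) - ε ∈ Set.Ioo (-1 : ℝ) 1 := by constructor <;> linarith
  have h1ε' : (-1 : ℝ) + ε ∈ Set.Ioo (-1 : ℝ) 1 := by constructor <;> linarith
  -- L > 0
  have hLpos : 0 < L := by
    have h0 : (0 : ℝ) ∈ Set.Icc (-1 : ℝ) 1 := by constructor <;> norm_num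
    have h1 : (1 : ℝ) ∈ Set.Icc (-1 : ℝ) 1 := by constructor <;> norm_num
    have := hm_lip 0 h0 1 h1
    rw [hm1] at this
    have hm0 : 0 < m 0 := hm_pos 0 (by constructor <;> norm_num)
    have : |m 0| ≤ L * 1 := by simpa using this
    rw [abs_of_pos hm0] at this
    linarith
  set c := ε * L with hcdef
  have hc : 0 < c := mul_pos hε0 hLpos
  -- mε positive everywhere
  have hmεpos : ∀ s : ℝ, 0 < mε s := by
    intro s
    rcases le_or_gt (|s|) (1 - ε) with h | h
    · rw [hmε1 s h]
      apply hm_pos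
      have := abs_le.mp h
      constructor <;> [linarith [this.1]; linarith [this.2]]
    · rcases lt_abs.mp h with h' | h'
      · rw [hmε2 s h']; exact hm_pos _ h1ε
      · rw [hmε3 s (by linarith)]; exact hm_pos _ h1ε'
  -- bound near +1 and -1
  have hbd1 : ∀ s : ℝ, 1 ≤ s → mε s ≤ c := by
    intro s hs
    rw [hmε2 s (by linarith)]
    have h1 : (1 - ε : ℝ) ∈ Set.Icc (-1 : ℝ) 1 := ⟨by linarith, by linarith⟩
    have h2 : (1 : ℝ) ∈ Set.Icc (-1 : ℝ) 1 := by constructor <;> norm_num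
    have := hm_lip (1 - ε) h1 1 h2
    rw [hm1, sub_zero] at this
    have habs : |(1 : ℝ) - ε - 1| = ε := by rw [abs_of_nonpos (by linarith)]; ring
    rw [habs] at this
    calc m (1 - ε) ≤ |m (1 - ε)| := le_abs_self _
      _ ≤ L * ε := this
      _ = c := by rw [hcdef]; ring
  have hbd2 : ∀ s : ℝ, 1 ≤ s → mε (-s) ≤ c := by
    intro s hs
    rw [hmε3 (-s) (by linarith)]
    have h1 : (-1 + ε : ℝ) ∈ Set.Icc (-1 : ℝ) 1 := ⟨by linarith, by linarith⟩
    have h2 : (-1 : ℝ) ∈ Set.Icc (-1 : ℝ) 1 := by constructor <;> norm_num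
    have := hm_lip (-1 + ε) h1 (-1) h2
    rw [hm1', sub_zero] at this
    have habs : |(-1 : ℝ) + ε - -1| = ε := by rw [show (-1 : ℝ) + ε - -1 = ε by ring, abs_of_pos hε0]
    rw [habs] at this
    calc m (-1 + ε) ≤ |m (-1 + ε)| := le_abs_self _
      _ ≤ L * ε := this
      _ = c := by rw [hcdef]; ring
  -- Mε' is monotone
  have hM'mono : Monotone Mε' := by
    apply monotone_of_deriv_nonneg (fun s => (hMd2 s).differentiableAt)
    intro s
    rw [(hMd2 s).deriv]
    have := hmεpos s
    positivity
  -- Mε nonneg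
  have hMnonneg : ∀ s : ℝ, 0 ≤ Mε s := by
    intro s
    rcases le_total 0 s with h | h
    · have hmono : MonotoneOn Mε (Set.Ici (0 : ℝ)) := by
        apply monotoneOn_of_deriv_nonneg (convex_Ici 0)
          (fun t _ => (hMd1 t).continuousAt.continuousWithinAt)
          (fun t _ => (hMd1 t).differentiableAt.differentiableWithinAt)
        intro t ht
        rw [interior_Ici] at ht
        rw [(hMd1 t).deriv]
        calc (0 : ℝ) = Mε' 0 := hM'0.symm
          _ ≤ Mε' t := hM'mono (le_of_lt ht)
      have := hmono Set.self_mem_Ici h h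
      rwa [hM0] at this
    · have hanti : AntitoneOn Mε (Set.Iic (0 : ℝ)) := by
        apply antitoneOn_of_deriv_nonpos (convex_Iic 0)
          (fun t _ => (hMd1 t).continuousAt.continuousWithinAt)
          (fun t _ => (hMd1 t).differentiableAt.differentiableWithinAt)
        intro t ht
        rw [interior_Iic] at ht
        rw [(hMd1 t).deriv]
        calc Mε' t ≤ Mε' 0 := hM'mono (le_of_lt ht)
          _ = 0 := hM'0
      have := hanti h Set.self_mem_Iic h
      rwa [hM0] at this
  have h2c : 2 * ε * L = 2 * c := by rw [hcdef]; ring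
  intro r
  rcases le_or_gt (|r|) 1 with h | h
  · rw [max_eq_right (by linarith)]
    rw [h2c]
    have h0 : 0 ≤ 2 * c * Mε r := mul_nonneg (by positivity) (hMnonneg r)
    nlinarith
  · rw [max_eq_left (by linarith)]
    rcases lt_abs.mp h with h' | h'
    · -- r > 1
      have hr : 1 ≤ r := le_of_lt h'
      have habs : |r| = r := abs_of_pos (by linarith)
      rw [habs, h2c]
      exact aux10 c hc Mε Mε' mε hMd1 hMd2 hmεpos hbd1
        (by rw [← hM'0]; exact hM'mono (by norm_num)) (hMnonneg 1) r hr
    · -- r < -1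
      have hr : 1 ≤ -r := by linarith
      have habs : |r| = -r := abs_of_neg (by linarith)
      rw [habs, h2c]
      have key := aux10 c hc (fun s => Mε (-s)) (fun s => -Mε' (-s)) (fun s => mε (-s))
        (fun s => by
          have := (hMd1 (-s)).comp s (hasDerivAt_neg s)
          exact this.congr_deriv (by ring))
        (fun s => by
          have := ((hMd2 (-s)).comp s (hasDerivAt_neg s)).neg
          exact this.congr_deriv (by simp))
        (fun s => hmεpos (-s)) (fun s hs => hbd2 s hs)
        (by
          have : Mε' (-1) ≤ 0 := by rw [← hM'0]; exact hM'mono (by norm_num)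
          linarith)
        (by simpa using hMnonneg (-1)) (-r) hr
      simpa using key
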